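/- Let d ≥ 1 be an integer. A sequence (c_n)_{n≥0} of complex numbers is oscillating of order d if and only if for every integer a ≥ 1 and every integer b ≥ 0, the arithmetic subsequence (c_{an+b})_{n≥0} is oscillating of order d. -/

import Mathlib

open Filter Finset

/-- A sequence `(c n)` of complex numbers is oscillating of order `d`. -/
def OscillatingOfOrder (c : ℕ → ℂ) (d : ℕ) : Prop :=
  ∀ P : Polynomial ℝ, P.natDegree ≤ d →
    Tendsto (fun N : ℕ =>
        (N : ℂ)⁻¹ * ∑ n ∈ Finset.range N,
          c n * Complex.exp (2 * Real.pi * Complex.I * (P.eval (n : ℝ))))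
      atTop (nhds 0)

noncomputable def ee (x : ℝ) : ℂ := Complex.exp (2 * Real.pi * Complex.I * x)

lemma ee_add (x y : ℝ) : ee (x + y) = ee x * ee y := by
  rw [ee, ee, ee, ← Complex.exp_add]; push_cast; ring_nf

lemma ee_int (n : ℤ) : ee n = 1 := by
  have := Complex.exp_int_mul_two_pi_mul_I n
  rw [ee]; rw [← this]; push_cast; ring_nf

lemma ee_pow (x : ℝ) (j : ℕ) : ee (j * x) = (ee x) ^ j := by
  rw [ee, ee, ← Complex.exp_nat_mul]; push_cast; ring_nf
lemma ee_ne_one {a t : ℕ} (ha : 1 ≤ a) (h : ¬ a ∣ t) : ee ((t : ℝ) / a) ≠ 1 := by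
  intro hone
  rw [ee, Complex.exp_eq_one_iff] at hone
  obtain ⟨n, hn⟩ := hone
  have hπ : (2 * Real.pi * Complex.I : ℂ) ≠ 0 := by
    simp [Real.pi_ne_zero, Complex.I_ne_zero]
  have h2 : (2 * (Real.pi : ℂ) * Complex.I) * (((t : ℝ) / a : ℝ) : ℂ)
      = (2 * (Real.pi : ℂ) * Complex.I) * (n : ℂ) := by rw [hn]; ring
  have h3c : (((t : ℝ) / a : ℝ) : ℂ) = (n : ℂ) := mul_left_cancel₀ hπ h2
  have h3 : ((t : ℝ) / a) = (n : ℝ) := by exact_mod_cast h3c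
  have ha' : (a : ℝ) ≠ 0 := by positivity
  have h4 : (t : ℝ) = (n : ℝ) * a := by field_simp at h3; linarith
  have h5 : (t : ℤ) = n * a := by exact_mod_cast h4
  have hn0 : 0 ≤ n := by nlinarith [Int.ofNat_nonneg t, Int.ofNat_nonneg a]
  lift n to ℕ using hn0 with m
  have h6 : t = m * a := by exact_mod_cast h5
  exact h ⟨m, h6.trans (mul_comm m a)⟩

lemma indicator_sum {a : ℕ} (ha : 1 ≤ a) (t : ℕ) :
    ∑ j ∈ range a, ee ((j : ℝ) * ((t : ℝ) / a)) = if a ∣ t then (a : ℂ) else 0 := by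
  have hrw : ∀ j ∈ range a, ee ((j : ℝ) * ((t : ℝ) / a)) = (ee ((t : ℝ) / a)) ^ j :=
    fun j _ => ee_pow _ j
  rw [Finset.sum_congr rfl hrw]
  by_cases hdvd : a ∣ t
  · rw [if_pos hdvd]
    obtain ⟨k, hk⟩ := hdvd
    have ha' : (a : ℝ) ≠ 0 := by positivity
    have h1 : ((t : ℝ) / a) = ((k : ℤ) : ℝ) := by subst hk; push_cast; field_simp
    have key : ee ((t : ℝ) / a) = 1 := by rw [h1, ee_int]
    simp [key]
  · rw [if_neg hdvd]
    have hne := ee_ne_one ha hdvd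
    rw [geom_sum_eq hne a]
    have ha' : (a : ℝ) ≠ 0 := by positivity
    have h1 : (a : ℝ) * ((t : ℝ) / a) = ((t : ℤ) : ℝ) := by push_cast; field_simp
    have hpow : (ee ((t : ℝ) / a)) ^ a = 1 := by rw [← ee_pow, h1, ee_int]
    simp [hpow]

noncomputable def Rpoly (P : Polynomial ℝ) (a b j : ℕ) : Polynomial ℝ :=
  P.comp (Polynomial.C (a : ℝ)⁻¹ * (Polynomial.X - Polynomial.C (b : ℝ)))
    + Polynomial.C ((j : ℝ) / a) * (Polynomial.X - Polynomial.C (b : ℝ))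

lemma Rpoly_eval (P : Polynomial ℝ) (a b j : ℕ) (x : ℝ) :
    (Rpoly P a b j).eval x = P.eval ((a : ℝ)⁻¹ * (x - b)) + ((j : ℝ) / a) * (x - b) := by
  simp [Rpoly, Polynomial.eval_comp]

lemma Rpoly_natDegree_le {d : ℕ} (hd : 1 ≤ d) {P : Polynomial ℝ} (hP : P.natDegree ≤ d)
    (a b j : ℕ) : (Rpoly P a b j).natDegree ≤ d := by
  refine le_trans (Polynomial.natDegree_add_le _ _) (max_le ?_ ?_)
  · refine le_trans (Polynomial.natDegree_comp_le) ?_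
    have h1 : (Polynomial.C (a : ℝ)⁻¹ * (Polynomial.X - Polynomial.C (b : ℝ))).natDegree ≤ 1 :=
      le_trans (Polynomial.natDegree_C_mul_le _ _) (le_of_eq (Polynomial.natDegree_X_sub_C _))
    calc P.natDegree * (Polynomial.C (a : ℝ)⁻¹ * (Polynomial.X - Polynomial.C (b : ℝ))).natDegree
        ≤ d * 1 := Nat.mul_le_mul hP h1
      _ = d := by ring
  · refine le_trans (Polynomial.natDegree_C_mul_le _ _) ?_
    rw [Polynomial.natDegree_X_sub_C]; exact hd

lemma Rpoly_eval_prog {a : ℕ} (ha : 1 ≤ a) (P : Polynomial ℝ) (b j n : ℕ) :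
    (Rpoly P a b j).eval ((a * n + b : ℕ) : ℝ) = P.eval (n : ℝ) + (j * n : ℕ) := by
  have ha' : (a : ℝ) ≠ 0 := by positivity
  rw [Rpoly_eval]
  push_cast
  rw [add_sub_cancel_right]
  have h1 : (a : ℝ)⁻¹ * ((a : ℝ) * n) = n := by field_simp
  have h2 : ((j : ℝ) / a) * ((a : ℝ) * n) = (j : ℝ) * n := by field_simp
  rw [h1, h2]

lemma Rpoly_eval_shift {a : ℕ} (ha : 1 ≤ a) (P : Polynomial ℝ) (b j t : ℕ) :
    (Rpoly P a b j).eval ((b + t : ℕ) : ℝ)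
      = (Rpoly P a b 0).eval ((b + t : ℕ) : ℝ) + (j : ℝ) * ((t : ℝ) / a) := by
  rw [Rpoly_eval, Rpoly_eval]
  push_cast
  ring

lemma main_identity {a : ℕ} (ha : 1 ≤ a) (c : ℕ → ℂ) (P : Polynomial ℝ) (b N : ℕ) :
    ∑ n ∈ range N, c (a * n + b) * ee (P.eval (n : ℝ))
      = (a : ℂ)⁻¹ * ∑ j ∈ range a, ∑ t ∈ range (a * N),
          c (b + t) * ee ((Rpoly P a b j).eval ((b + t : ℕ) : ℝ)) := by
  have ha0 : a ≠ 0 := by omega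
  have ha' : (a : ℂ) ≠ 0 := Nat.cast_ne_zero.mpr ha0
  rw [Finset.sum_comm]
  have step1 : ∀ t ∈ range (a * N),
      ∑ j ∈ range a, c (b + t) * ee ((Rpoly P a b j).eval ((b + t : ℕ) : ℝ))
        = if a ∣ t then c (b + t) * ee ((Rpoly P a b 0).eval ((b + t : ℕ) : ℝ)) * a else 0 := by
    intro t _
    have : ∀ j ∈ range a, c (b + t) * ee ((Rpoly P a b j).eval ((b + t : ℕ) : ℝ))
        = c (b + t) * ee ((Rpoly P a b 0).eval ((b + t : ℕ) : ℝ)) * ee ((j : ℝ) * ((t : ℝ) / a)) := by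
      intro j _
      rw [Rpoly_eval_shift ha, ee_add]; ring
    rw [Finset.sum_congr rfl this, ← Finset.mul_sum, indicator_sum ha t]
    split <;> simp
  rw [Finset.sum_congr rfl step1, ← Finset.sum_filter]
  have hset : (range (a * N)).filter (fun t => a ∣ t) = (range N).image (fun n => a * n) := by
    ext t
    simp only [mem_filter, mem_range, mem_image]
    constructor
    · rintro ⟨hlt, k, rfl⟩
      exact ⟨k, lt_of_mul_lt_mul_left hlt (Nat.zero_le a), rfl⟩
    · rintro ⟨n, hn, rfl⟩
      exact ⟨by exact Nat.mul_lt_mul_of_le_of_lt (le_refl a) hn (by omega), ⟨n, rfl⟩⟩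
  rw [hset, Finset.sum_image (fun x _ y _ h => Nat.eq_of_mul_eq_mul_left (by omega) h)]
  rw [← Finset.sum_mul, mul_comm ((a : ℂ)⁻¹) _, mul_assoc, mul_inv_cancel₀ ha', mul_one]
  refine Finset.sum_congr rfl fun n _ => ?_
  rw [Nat.add_comm b (a * n), Rpoly_eval_prog ha]
  simp

lemma tendsto_cast_inv : Tendsto (fun N : ℕ => ((N : ℂ))⁻¹) atTop (nhds 0) := by
  have h := tendsto_inv_atTop_zero.comp (tendsto_natCast_atTop_atTop (R := ℝ))
  have h2 := (Complex.continuous_ofReal.tendsto 0).comp h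
  exact h2.congr fun N => by simp

lemma tendsto_ratio {a : ℕ} (ha : 1 ≤ a) (b : ℕ) :
    Tendsto (fun N : ℕ => ((b + a * N : ℕ) : ℂ) / N) atTop (nhds a) := by
  have h : Tendsto (fun N : ℕ => (a : ℂ) + b * (N : ℂ)⁻¹) atTop (nhds ((a : ℂ) + b * 0)) :=
    tendsto_const_nhds.add (tendsto_const_nhds.mul tendsto_cast_inv)
  refine Tendsto.congr' ?_ (by simpa using h)
  filter_upwards [eventually_ge_atTop 1] with N hN
  have hN0 : (N : ℂ) ≠ 0 := Nat.cast_ne_zero.mpr (by omega)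
  push_cast
  field_simp
  ring

lemma subseq_tendsto {d a : ℕ} (ha : 1 ≤ a) (c : ℕ → ℂ) (H : OscillatingOfOrder c d)
    (R : Polynomial ℝ) (hR : R.natDegree ≤ d) (b : ℕ) :
    Tendsto (fun N : ℕ => (N : ℂ)⁻¹ * ∑ t ∈ range (a * N),
      c (b + t) * ee (R.eval ((b + t : ℕ) : ℝ))) atTop (nhds 0) := by
  set G : ℕ → ℂ := fun M => ∑ m ∈ range M, c m * ee (R.eval ((m : ℕ) : ℝ)) with hG
  have HG : Tendsto (fun M : ℕ => (M : ℂ)⁻¹ * G M) atTop (nhds 0) := H R hR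
  have hcomp : Tendsto (fun N : ℕ => b + a * N) atTop atTop := by
    apply tendsto_atTop_atTop.mpr
    intro x
    exact ⟨x, fun n hn => by nlinarith⟩
  have h1 : Tendsto (fun N : ℕ => ((b + a * N : ℕ) : ℂ)⁻¹ * G (b + a * N)) atTop (nhds 0) :=
    HG.comp hcomp
  have h2 := (tendsto_ratio ha b).mul h1
  have h3 := tendsto_cast_inv.mul_const (G b)
  have h4 := h2.sub h3
  have heq : (fun N : ℕ => ((b + a * N : ℕ) : ℂ) / N * (((b + a * N : ℕ) : ℂ)⁻¹ * G (b + a * N)) - (N : ℂ)⁻¹ * G b)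
      =ᶠ[atTop] fun N : ℕ => (N : ℂ)⁻¹ * ∑ t ∈ range (a * N), c (b + t) * ee (R.eval ((b + t : ℕ) : ℝ)) := by
    filter_upwards [eventually_ge_atTop 1] with N hN
    have hsum : G (b + a * N) = G b + ∑ t ∈ range (a * N), c (b + t) * ee (R.eval ((b + t : ℕ) : ℝ)) :=
      Finset.sum_range_add _ b (a * N)
    have hN0 : (N : ℂ) ≠ 0 := Nat.cast_ne_zero.mpr (by omega)
    have hpos : 1 ≤ a * N := Nat.one_le_iff_ne_zero.mpr (Nat.mul_ne_zero (by omega) (by omega))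
    have hab0 : ((b + a * N : ℕ) : ℂ) ≠ 0 := Nat.cast_ne_zero.mpr (by omega)
    have hc : ((b + a * N : ℕ) : ℂ) / N * ((b + a * N : ℕ) : ℂ)⁻¹ = (N : ℂ)⁻¹ := by
      rw [div_eq_mul_inv, mul_comm (((b + a * N : ℕ) : ℂ)), mul_assoc, mul_inv_cancel₀ hab0, mul_one]

    rw [hsum, ← mul_assoc, hc, mul_add]
    ring
  simpa using Tendsto.congr' heq h4

theorem oscillating_iff_arith_subseq (d : ℕ) (hd : 1 ≤ d) (c : ℕ → ℂ) :
    OscillatingOfOrder c d ↔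
      ∀ a : ℕ, 1 ≤ a → ∀ b : ℕ, OscillatingOfOrder (fun n => c (a * n + b)) d := by
  constructor
  · intro H a ha b P hP
    have hterm : ∀ j ∈ range a, Tendsto (fun N : ℕ => (N : ℂ)⁻¹ * ∑ t ∈ range (a * N),
        c (b + t) * ee ((Rpoly P a b j).eval ((b + t : ℕ) : ℝ))) atTop (nhds 0) :=
      fun j _ => subseq_tendsto ha c H _ (Rpoly_natDegree_le hd hP a b j) b
    have hsum := tendsto_finset_sum (range a) hterm
    have h0 := hsum.const_mul ((a : ℂ)⁻¹)
    have hz : (a : ℂ)⁻¹ * ∑ _x ∈ range a, (0 : ℂ) = 0 := by simp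
    rw [hz] at h0
    refine Tendsto.congr (fun N => ?_) h0
    rw [← Finset.mul_sum, ← mul_assoc, mul_comm ((a : ℂ)⁻¹) ((N : ℂ)⁻¹), mul_assoc,
      ← main_identity ha c P b N]
    rfl
  · intro h P hP
    have h10 := h 1 le_rfl 0 P hP
    simpa using h10
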